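/- If Re(c-a-b) > 0, then lim_{x→1⁻} F(a,b;c;x) = Γ(c)Γ(c-a-b)/(Γ(c-a)Γ(c-b)). -/

import Mathlib

noncomputable def gaussHF (a b c x : ℝ) : ℝ :=
  ∑' n : ℕ, ((ascPochhammer ℝ n).eval a * (ascPochhammer ℝ n).eval b /
    ((ascPochhammer ℝ n).eval c * n.factorial)) * x ^ n

open Filter Finset Polynomial Topology

namespace GaussAux



noncomputable def t (a b c : ℝ) (n : ℕ) : ℝ :=
  (ascPochhammer ℝ n).eval a * (ascPochhammer ℝ n).eval b /
    ((ascPochhammer ℝ n).eval c * n.factorial)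

noncomputable def poch (x : ℝ) (n : ℕ) : ℝ := (ascPochhammer ℝ n).eval x

lemma t_eq (a b c : ℝ) (n : ℕ) : t a b c n = poch a n * poch b n / (poch c n * n.factorial) := rfl

@[simp] lemma poch_zero (x : ℝ) : poch x 0 = 1 := by simp [poch]

lemma poch_succ (x : ℝ) (n : ℕ) : poch x (n + 1) = poch x n * (x + n) := by
  simp [poch, ascPochhammer_succ_eval]

lemma poch_succ_left (x : ℝ) (n : ℕ) : poch x (n + 1) = x * poch (x + 1) n := by
  simp [poch, ascPochhammer_succ_left, eval_comp, eval_mul]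

lemma poch_pos {x : ℝ} (hx : 0 < x) (n : ℕ) : 0 < poch x n := by
  induction n with
  | zero => simp
  | succ n ih => rw [poch_succ]; positivity

lemma poch_ne_zero {x : ℝ} (hx : ∀ k : ℕ, x + k ≠ 0) (n : ℕ) : poch x n ≠ 0 := by
  induction n with
  | zero => simp
  | succ n ih => rw [poch_succ]; exact mul_ne_zero ih (hx n)

lemma abs_poch_le (x : ℝ) (n : ℕ) : |poch x n| ≤ poch |x| n := by
  induction n with
  | zero => simp
  | succ n ih =>
      rw [poch_succ, poch_succ, abs_mul]
      refine mul_le_mul ih ((abs_add_le _ _).trans ?_) (abs_nonneg _) ((abs_nonneg _).trans ih)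
      simp

lemma poch_mono {x y : ℝ} (hx : 0 < x) (hxy : x ≤ y) (n : ℕ) : poch x n ≤ poch y n := by
  induction n with
  | zero => simp
  | succ n ih =>
      rw [poch_succ, poch_succ]
      have := poch_pos hx n
      have : (0:ℝ) < x + n := by positivity
      nlinarith [poch_pos hx n]

@[simp] lemma t_zero (a b c : ℝ) : t a b c 0 = 1 := by simp [t_eq]

lemma t_succ (a b c : ℝ) (hc : ∀ k : ℕ, c + k ≠ 0) (n : ℕ) :
    t a b c (n + 1) = t a b c n * ((a + n) * (b + n) / ((c + n) * (n + 1))) := by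
  have h1 : poch c n ≠ 0 := poch_ne_zero hc n
  have h2 : (c + n) ≠ 0 := hc n
  have h3 : (n.factorial : ℝ) ≠ 0 := Nat.cast_ne_zero.2 n.factorial_ne_zero
  rw [t_eq, t_eq, poch_succ, poch_succ, poch_succ, Nat.factorial_succ]
  push_cast
  field_simp


lemma one_le_poch {x : ℝ} (hx : 1 ≤ x) (n : ℕ) : 1 ≤ poch x n := by
  induction n with
  | zero => rw [poch_zero]
  | succ n ih =>
      rw [poch_succ]
      have h2 : (1:ℝ) ≤ x + n := by
        have : (0:ℝ) ≤ n := Nat.cast_nonneg n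
        linarith
      nlinarith

lemma exists_bound (a b c : ℝ) (hc : ∀ k : ℕ, c + k ≠ 0) (h : 0 < c - a - b) :
    ∃ (N : ℕ) (C : ℝ), 0 ≤ C ∧ 1 ≤ N ∧ ∀ n, N ≤ n →
      |t a b c n| ≤ C * (n : ℝ) ^ (-(1 + (c - a - b) / 2)) := by
  set δ : ℝ := (c - a - b) / 2 with hδ
  have hδ0 : 0 < δ := by positivity
  obtain ⟨N₀, hN₀⟩ := exists_nat_gt (max (|a| + |b| + |c| + 1) ((a * b + δ * c) / δ))
  set N : ℕ := N₀ + 1 with hN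
  have hNgt : (N : ℝ) > max (|a| + |b| + |c| + 1) ((a * b + δ * c) / δ) := by
    refine lt_of_lt_of_le hN₀ ?_
    exact_mod_cast Nat.le_succ N₀
  -- key monotonicity step
  have key : ∀ n : ℕ, N ≤ n →
      |t a b c (n + 1)| * ((n + 1 : ℕ) : ℝ) ^ (1 + δ) ≤ |t a b c n| * (n : ℝ) ^ (1 + δ) := by
    intro n hn
    have hnR : (N : ℝ) ≤ (n : ℝ) := by exact_mod_cast hn
    have h1 : |a| + |b| + |c| + 1 < (n : ℝ) := lt_of_le_of_lt (le_max_left _ _) (lt_of_lt_of_le hNgt hnR)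
    have h2 : (a * b + δ * c) / δ < (n : ℝ) := lt_of_le_of_lt (le_max_right _ _) (lt_of_lt_of_le hNgt hnR)
    have hna : 0 < a + n := by linarith [neg_abs_le a, abs_nonneg b, abs_nonneg c]
    have hnb : 0 < b + n := by linarith [neg_abs_le b, abs_nonneg a, abs_nonneg c]
    have hnc : 0 < c + n := by linarith [neg_abs_le c, abs_nonneg a, abs_nonneg b]
    have hn1 : (0:ℝ) < n := by linarith [abs_nonneg a, abs_nonneg b, abs_nonneg c]
    have habδ : a * b + δ * c ≤ δ * n := by
      rw [div_lt_iff₀ hδ0] at h2; linarith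
    -- ratio bound
    have hratio : (a + n) * (b + n) / ((c + n) * (n + 1)) ≤ ((n:ℝ) / (n + 1)) ^ (1 + δ) := by
      have hb : (1 : ℝ) + (1 + δ) * (-(1 / (n + 1))) ≤ (1 + (-(1 / (n + 1)))) ^ (1 + δ) := by
        apply one_add_mul_self_le_rpow_one_add _ (by linarith)
        rw [neg_le, neg_neg]
        rw [div_le_one (by linarith)]; linarith
      have he : (1 : ℝ) + (-(1 / (n + 1))) = (n : ℝ) / (n + 1) := by
        field_simp
        ring
      rw [he] at hb
      refine le_trans ?_ hb
      rw [div_le_iff₀ (by positivity)]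
      have expand : (1 + (1 + δ) * (-(1 / (n + 1)))) * ((c + n) * (n + 1))
          = (c + n) * (n - δ) := by
        field_simp; ring
      rw [expand]
      nlinarith
    calc |t a b c (n + 1)| * ((n + 1 : ℕ) : ℝ) ^ (1 + δ)
        = |t a b c n| * ((a + n) * (b + n) / ((c + n) * (n + 1))) * ((n + 1 : ℕ) : ℝ) ^ (1 + δ) := by
          rw [t_succ a b c hc n, abs_mul,
            abs_of_pos (show (0:ℝ) < (a + ↑n) * (b + ↑n) / ((c + ↑n) * (↑n + 1)) by positivity)]
      _ ≤ |t a b c n| * ((n:ℝ) / (n + 1)) ^ (1 + δ) * ((n + 1 : ℕ) : ℝ) ^ (1 + δ) := by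
          apply mul_le_mul_of_nonneg_right _ (by positivity)
          exact mul_le_mul_of_nonneg_left hratio (abs_nonneg _)
      _ = |t a b c n| * (n : ℝ) ^ (1 + δ) := by
          rw [mul_assoc, ← Real.mul_rpow (by positivity) (by positivity)]
          push_cast
          rw [div_mul_cancel₀]
          positivity
  -- deduce the bound by induction
  refine ⟨N, |t a b c N| * (N : ℝ) ^ (1 + δ), by positivity, Nat.succ_le_succ (Nat.zero_le _), ?_⟩
  have main : ∀ n, N ≤ n → |t a b c n| * (n : ℝ) ^ (1 + δ) ≤ |t a b c N| * (N : ℝ) ^ (1 + δ) := by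
    intro n hn
    induction n with
    | zero => omega
    | succ n ih =>
        rcases Nat.lt_or_ge N (n + 1) with hlt | hge
        · have hn' : N ≤ n := by omega
          exact le_trans (key n hn') (ih hn')
        · have : N = n + 1 := by omega
          rw [this]
  intro n hn
  have hn0 : (0:ℝ) < n := by
    have : (1:ℕ) ≤ n := le_trans (Nat.succ_le_succ (Nat.zero_le _)) hn
    exact_mod_cast Nat.lt_of_lt_of_le Nat.zero_lt_one this
  rw [Real.rpow_neg (le_of_lt hn0), mul_comm, inv_mul_eq_div, le_div_iff₀ (by positivity)]
  exact main n hn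

lemma summable_t (a b c : ℝ) (hc : ∀ k : ℕ, c + k ≠ 0) (h : 0 < c - a - b) :
    Summable (t a b c) := by
  obtain ⟨N, C, hC0, hN1, hB⟩ := exists_bound a b c hc h
  rw [← summable_abs_iff, ← summable_nat_add_iff N]
  have hs : Summable (fun n : ℕ => C * ((n + N : ℕ) : ℝ) ^ (-(1 + (c - a - b) / 2))) := by
    apply Summable.mul_left
    have base : Summable (fun n : ℕ => (n : ℝ) ^ (-(1 + (c - a - b) / 2))) :=
      Real.summable_nat_rpow.2 (by linarith)
    exact (summable_nat_add_iff N).2 base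
  refine Summable.of_nonneg_of_le (fun n => abs_nonneg _) (fun n => ?_) hs
  exact hB (n + N) (Nat.le_add_left N n)

lemma tendsto_nat_mul_t (a b c : ℝ) (hc : ∀ k : ℕ, c + k ≠ 0) (h : 0 < c - a - b) :
    Tendsto (fun n : ℕ => (n : ℝ) * t a b c n) atTop (𝓝 0) := by
  obtain ⟨N, C, hC0, hN1, hB⟩ := exists_bound a b c hc h
  apply squeeze_zero_norm' (a := fun n : ℕ => C * (n : ℝ) ^ (-((c - a - b) / 2)))
  · filter_upwards [eventually_ge_atTop N] with n hn
    have hn0 : (0:ℝ) < n := by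
      have : (1:ℕ) ≤ n := le_trans hN1 hn
      exact_mod_cast this
    have h1 : ‖(n : ℝ) * t a b c n‖ = (n : ℝ) * |t a b c n| := by
      rw [norm_mul]; simp [abs_of_pos hn0]
    rw [h1]
    calc (n : ℝ) * |t a b c n| ≤ (n : ℝ) * (C * (n : ℝ) ^ (-(1 + (c - a - b) / 2))) :=
          mul_le_mul_of_nonneg_left (hB n hn) hn0.le
      _ = C * ((n:ℝ) ^ (1:ℝ) * (n : ℝ) ^ (-(1 + (c - a - b) / 2))) := by
          rw [Real.rpow_one]; ring
      _ = C * (n : ℝ) ^ (-((c - a - b) / 2)) := by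
          rw [← Real.rpow_add hn0]; norm_num
  · have h0 : Tendsto (fun x : ℝ => C * x ^ (-((c - a - b) / 2))) atTop (𝓝 (C * 0)) :=
      (tendsto_rpow_neg_atTop (by linarith)).const_mul C
    rw [mul_zero] at h0
    exact h0.comp (tendsto_natCast_atTop_atTop (R := ℝ))

lemma hc_succ {c : ℝ} (hc : ∀ k : ℕ, c + k ≠ 0) : ∀ k : ℕ, (c + 1) + k ≠ 0 := by
  intro k
  have h := hc (k + 1)
  push_cast at h
  rwa [show c + 1 + (k:ℝ) = c + ((k:ℝ) + 1) by ring]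

lemma hc_add_nat {c : ℝ} (hc : ∀ k : ℕ, c + k ≠ 0) (m : ℕ) : ∀ k : ℕ, (c + m) + k ≠ 0 := by
  intro k
  have := hc (m + k)
  push_cast at this ⊢
  rw [add_assoc]
  exact this

/-- contiguous relation in `c`, at `x = 1`. -/
lemma step_c (a b c : ℝ) (hc : ∀ k : ℕ, c + k ≠ 0) (h : 0 < c - a - b) :
    c * (c - a - b) * ∑' n, t a b c n = (c - a) * (c - b) * ∑' n, t a b (c + 1) n := by
  have hc1 := hc_succ hc
  have h1 : 0 < (c + 1) - a - b := by linarith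
  have S1 := summable_t a b c hc h
  have S2 := summable_t a b (c + 1) hc1 h1
  set d : ℕ → ℝ := fun n => (n : ℝ) * t a b c n with hd
  have key : ∀ n : ℕ, c * (c - a - b) * t a b c n - (c - a) * (c - b) * t a b (c + 1) n
      = c * (d n - d (n + 1)) := by
    intro n
    have e1 : poch c (n + 1) = c * poch (c + 1) n := poch_succ_left c n
    have e2 : poch c (n + 1) = poch c n * (c + n) := poch_succ c n
    have hR : poch c n ≠ 0 := poch_ne_zero hc n
    have hR' : poch (c + 1) n ≠ 0 := poch_ne_zero hc1 n
    have hcn : c + (n:ℝ) ≠ 0 := hc n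
    have hc0 : c ≠ 0 := by simpa using hc 0
    have hF : ((n.factorial : ℝ)) ≠ 0 := Nat.cast_ne_zero.2 n.factorial_ne_zero
    have hR'' : poch (c + 1) n = poch c n * (c + n) / c := by
      field_simp
      linear_combination e2 - e1
    simp only [hd]
    rw [t_eq, t_eq, t_eq, hR'']
    push_cast
    rw [poch_succ a n, poch_succ b n, poch_succ c n, Nat.factorial_succ]
    push_cast
    field_simp
    ring
  -- telescoping sum
  set G : ℕ → ℝ := fun n => c * (c - a - b) * t a b c n - (c - a) * (c - b) * t a b (c + 1) n
    with hG
  have hsum : Summable G := ((S1.mul_left _).sub (S2.mul_left _))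
  have hpartial : ∀ N : ℕ, ∑ i ∈ range N, G i = c * (d 0 - d N) := by
    intro N
    calc ∑ i ∈ range N, G i = ∑ i ∈ range N, c * (d i - d (i + 1)) := by
          exact Finset.sum_congr rfl fun i _ => key i
      _ = c * ∑ i ∈ range N, (d i - d (i + 1)) := by rw [Finset.mul_sum]
      _ = c * (d 0 - d N) := by rw [Finset.sum_range_sub' d N]
  have hlim : Tendsto (fun N : ℕ => c * (d 0 - d N)) atTop (𝓝 0) := by
    have : Tendsto (fun N : ℕ => d N) atTop (𝓝 0) := tendsto_nat_mul_t a b c hc h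
    have h2 : Tendsto (fun N : ℕ => c * (d 0 - d N)) atTop (𝓝 (c * (d 0 - 0))) :=
      (tendsto_const_nhds.sub this).const_mul c
    simpa [hd] using h2
  have htsum : ∑' n, G n = 0 := by
    have h1' := hsum.hasSum.tendsto_sum_nat
    have h2' : Tendsto (fun N : ℕ => ∑ i ∈ range N, G i) atTop (𝓝 0) := by
      simpa only [hpartial] using hlim
    exact tendsto_nhds_unique h1' h2'
  have expand : ∑' n, G n = c * (c - a - b) * ∑' n, t a b c n
      - (c - a) * (c - b) * ∑' n, t a b (c + 1) n := by
    rw [hG]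
    rw [Summable.tsum_sub (S1.mul_left _) (S2.mul_left _), tsum_mul_left, tsum_mul_left]
  rw [expand] at htsum
  linarith

lemma iterate_c (a b c : ℝ) (hc : ∀ k : ℕ, c + k ≠ 0) (h : 0 < c - a - b) (m : ℕ) :
    ∑' n, t a b c n =
      (∏ j ∈ range m, ((c + j - a) * (c + j - b) / ((c + j) * (c + j - a - b)))) *
        ∑' n, t a b (c + m) n := by
  induction m with
  | zero => simp
  | succ m ih =>
      have hc' := hc_add_nat hc m
      have h' : 0 < (c + m) - a - b := by
        have : (0:ℝ) ≤ m := Nat.cast_nonneg m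
        linarith
      have hstep := step_c a b (c + m) hc' h'
      have hne1 : (c + (m:ℝ)) ≠ 0 := by simpa using hc' 0
      have hne2 : (c + (m:ℝ)) - a - b ≠ 0 := ne_of_gt h'
      have hS : ∑' n, t a b (c + m) n =
          ((c + m - a) * (c + m - b) / ((c + m) * (c + m - a - b))) *
            ∑' n, t a b (c + m + 1) n := by
        rw [eq_comm, div_mul_eq_mul_div, div_eq_iff (by exact mul_ne_zero hne1 hne2)]
        linarith [hstep]
      rw [ih, hS, prod_range_succ]
      have : (c + ((m:ℕ):ℝ) + 1) = c + (((m+1:ℕ)):ℝ) := by push_cast; ring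
      rw [this]
      ring

lemma tendsto_tail (a b c : ℝ) (hc : ∀ k : ℕ, c + k ≠ 0) :
    Tendsto (fun m : ℕ => ∑' n, t a b (c + m) n) atTop (𝓝 1) := by
  obtain ⟨m₀, hm₀⟩ := exists_nat_gt (|a| + |b| + 1 - c)
  have hc₀ : 0 < c + m₀ := by
    have h1 : 0 ≤ |a| + |b| + 1 := by positivity
    linarith
  have hcab : 0 < (c + m₀) - |a| - |b| := by linarith
  -- dominating function
  set g : ℕ → ℝ := fun n => t |a| |b| (c + m₀) n with hg
  have hgsum : Summable g := by
    apply summable_t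
    · intro k
      have : (0:ℝ) ≤ k := Nat.cast_nonneg k
      positivity
    · exact hcab
  -- the pointwise limit function
  set L : ℕ → ℝ := fun n => if n = 0 then (1:ℝ) else 0 with hL
  have hLsum : ∑' n, L n = 1 := by
    rw [tsum_eq_single 0 (by intro n hn; simp [hL, hn])]
    simp [hL]
  have hmain : Tendsto (fun m : ℕ => ∑' n, t a b (c + m) n) atTop (𝓝 (∑' n, L n)) := by
    apply tendsto_tsum_of_dominated_convergence hgsum
    · intro k
      rcases Nat.eq_zero_or_pos k with rfl | hk
      · simpa [t_zero, hL] using tendsto_const_nhds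
      · obtain ⟨k', rfl⟩ := Nat.exists_eq_succ_of_ne_zero (Nat.pos_iff_ne_zero.1 hk)
        simp only [hL, Nat.succ_ne_zero, if_false]
        -- |t a b (c+m) (k'+1)| ≤ K / (c+m)
        apply squeeze_zero_norm' (a := fun m : ℕ => (poch |a| (k'+1) * poch |b| (k'+1) / (k'+1).factorial) / (c + m))
        · filter_upwards [eventually_gt_atTop (Nat.ceil (1 - c) + 1)] with m hm
          have hcm1 : 1 ≤ c + m := by
            have h2 : (1:ℝ) - c ≤ Nat.ceil (1 - c) := Nat.le_ceil _
            have h3 : ((Nat.ceil (1 - c) + 1 : ℕ):ℝ) ≤ m := by exact_mod_cast hm.le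
            push_cast at h3
            linarith
          have hcm0 : 0 < c + m := by linarith
          have hd1 : (0:ℝ) < poch (c + m) (k' + 1) := poch_pos hcm0 _
          rw [t_eq, Real.norm_eq_abs, abs_div, abs_mul]
          rw [abs_of_pos (by positivity : (0:ℝ) < poch (c+m) (k'+1) * ((k'+1).factorial : ℝ))]
          have hnum : |poch a (k'+1)| * |poch b (k'+1)| ≤ poch |a| (k'+1) * poch |b| (k'+1) :=
            mul_le_mul (abs_poch_le _ _) (abs_poch_le _ _) (abs_nonneg _)
              ((abs_nonneg _).trans (abs_poch_le _ _))
          rw [div_div]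
          refine div_le_div₀ ((mul_nonneg (abs_nonneg _) (abs_nonneg _)).trans hnum) hnum
            (by positivity) ?_
          have hlow : c + (m:ℝ) ≤ poch (c + m) (k' + 1) := by
            rw [poch_succ_left]
            have h1 : (1:ℝ) ≤ poch (c + m + 1) k' := one_le_poch (by linarith) k'
            nlinarith
          calc (((k'+1).factorial : ℝ)) * (c + m) = (c + m) * ((k'+1).factorial : ℝ) := by ring
            _ ≤ poch (c + m) (k' + 1) * ((k'+1).factorial : ℝ) := by
                have : (0:ℝ) < ((k'+1).factorial : ℝ) := by positivity
                nlinarith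
        · apply Tendsto.div_atTop (a := poch |a| (k'+1) * poch |b| (k'+1) / ((k'+1).factorial:ℝ))
            tendsto_const_nhds
          apply tendsto_atTop_add_const_left
          exact tendsto_natCast_atTop_atTop
    · filter_upwards [eventually_ge_atTop m₀] with m hm
      intro k
      have hmR : (m₀:ℝ) ≤ m := by exact_mod_cast hm
      have hcm : 0 < c + (m:ℝ) := by linarith
      have hd : 0 < poch (c + m) k := poch_pos hcm k
      have hd₀ : 0 < poch (c + m₀) k := poch_pos hc₀ k
      rw [t_eq, Real.norm_eq_abs, abs_div, abs_mul, hg]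
      rw [abs_of_pos (by positivity : (0:ℝ) < poch (c+m) k * (k.factorial : ℝ))]
      show _ ≤ t |a| |b| (c + ↑m₀) k
      rw [t_eq]
      refine div_le_div₀ ?_ ?_ (by positivity) ?_
      · have h1 : (0:ℝ) ≤ poch |a| k := (abs_nonneg _).trans (abs_poch_le _ _)
        have h2 : (0:ℝ) ≤ poch |b| k := (abs_nonneg _).trans (abs_poch_le _ _)
        positivity
      · exact mul_le_mul (abs_poch_le _ _) (abs_poch_le _ _) (abs_nonneg _)
          ((abs_nonneg _).trans (abs_poch_le _ _))
      · have : poch (c + m₀) k ≤ poch (c + m) k := poch_mono hc₀ (by linarith) k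
        have hf : (0:ℝ) < (k.factorial : ℝ) := by positivity
        nlinarith
  rw [hLsum] at hmain
  exact hmain

lemma gauss_value (a b c : ℝ) (hc : ∀ k : ℕ, c + k ≠ 0) (h : 0 < c - a - b) :
    ∑' n, t a b c n =
      Real.Gamma c * Real.Gamma (c - a - b) / (Real.Gamma (c - a) * Real.Gamma (c - b)) := by
  set S := ∑' n, t a b c n with hS
  set P : ℕ → ℝ :=
    fun m => ∏ j ∈ range m, ((c + j - a) * (c + j - b) / ((c + j) * (c + j - a - b))) with hP
  have htail := tendsto_tail a b c hc
  -- P tends to S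
  have hPS : Tendsto P atTop (𝓝 S) := by
    have hne : ∀ᶠ m : ℕ in atTop, (∑' n, t a b (c + (m:ℝ)) n) ≠ 0 := by
      exact htail.eventually_ne (by norm_num : (1:ℝ) ≠ 0)
    have hdiv : Tendsto (fun m : ℕ => S / ∑' n, t a b (c + m) n) atTop (𝓝 S) := by
      have := Tendsto.div (tendsto_const_nhds (x := S)) htail one_ne_zero
      rw [div_one] at this
      exact this
    refine hdiv.congr' ?_
    filter_upwards [hne] with m hm
    rw [div_eq_iff hm]
    exact iterate_c a b c hc h m
  -- case analysis
  rcases eq_or_ne (Real.Gamma (c - a)) 0 with hza | hza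
  · obtain ⟨k, hk⟩ := (Real.Gamma_eq_zero_iff _).1 hza
    have hP0 : ∀ᶠ m in atTop, P m = 0 := by
      filter_upwards [eventually_ge_atTop (k + 1)] with m hm
      apply Finset.prod_eq_zero (Finset.mem_range.2 (by omega : k < m))
      rw [show c + (k:ℝ) - a = (c - a) + k by ring, hk]
      simp
    have : Tendsto P atTop (𝓝 0) := Tendsto.congr' (hP0.mono fun m hm => hm.symm) tendsto_const_nhds
    have hS0 : S = 0 := tendsto_nhds_unique hPS this
    rw [hS0, hza, zero_mul, div_zero]
  rcases eq_or_ne (Real.Gamma (c - b)) 0 with hzb | hzb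
  · obtain ⟨k, hk⟩ := (Real.Gamma_eq_zero_iff _).1 hzb
    have hP0 : ∀ᶠ m in atTop, P m = 0 := by
      filter_upwards [eventually_ge_atTop (k + 1)] with m hm
      apply Finset.prod_eq_zero (Finset.mem_range.2 (by omega : k < m))
      rw [show c + (k:ℝ) - b = (c - b) + k by ring, hk]
      simp
    have : Tendsto P atTop (𝓝 0) := Tendsto.congr' (hP0.mono fun m hm => hm.symm) tendsto_const_nhds
    have hS0 : S = 0 := tendsto_nhds_unique hPS this
    rw [hS0, hzb, mul_zero, div_zero]
  -- main case
  have hca : ∀ j : ℕ, c - a + (j:ℝ) ≠ 0 := by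
    intro j hj
    exact hza ((Real.Gamma_eq_zero_iff _).2 ⟨j, by linarith⟩)
  have hcb : ∀ j : ℕ, c - b + (j:ℝ) ≠ 0 := by
    intro j hj
    exact hzb ((Real.Gamma_eq_zero_iff _).2 ⟨j, by linarith⟩)
  have hcab : ∀ j : ℕ, c - a - b + (j:ℝ) ≠ 0 := by
    intro j
    have : (0:ℝ) ≤ j := Nat.cast_nonneg j
    positivity
  -- the GammaSeq identity
  have key : ∀ n : ℕ, 1 ≤ n → P (n + 1) =
      Real.GammaSeq c n * Real.GammaSeq (c - a - b) n /
        (Real.GammaSeq (c - a) n * Real.GammaSeq (c - b) n) := by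
    intro n hn
    have hn0 : (0:ℝ) < n := by exact_mod_cast hn
    have hA : ∏ j ∈ range (n + 1), (c - a + (j:ℝ)) ≠ 0 :=
      Finset.prod_ne_zero_iff.2 fun j _ => hca j
    have hB : ∏ j ∈ range (n + 1), (c - b + (j:ℝ)) ≠ 0 :=
      Finset.prod_ne_zero_iff.2 fun j _ => hcb j
    have hC : ∏ j ∈ range (n + 1), (c + (j:ℝ)) ≠ 0 :=
      Finset.prod_ne_zero_iff.2 fun j _ => hc j
    have hD : ∏ j ∈ range (n + 1), (c - a - b + (j:ℝ)) ≠ 0 :=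
      Finset.prod_ne_zero_iff.2 fun j _ => hcab j
    have hF : ((n.factorial : ℝ)) ≠ 0 := Nat.cast_ne_zero.2 n.factorial_ne_zero
    have hpca : (n:ℝ) ^ (c - a) ≠ 0 := (Real.rpow_pos_of_pos hn0 _).ne'
    have hpcb : (n:ℝ) ^ (c - b) ≠ 0 := (Real.rpow_pos_of_pos hn0 _).ne'
    have hpc : (n:ℝ) ^ c ≠ 0 := (Real.rpow_pos_of_pos hn0 _).ne'
    have hpcab : (n:ℝ) ^ (c - a - b) ≠ 0 := (Real.rpow_pos_of_pos hn0 _).ne'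
    have hpow : (n:ℝ) ^ c * (n:ℝ) ^ (c - a - b) = (n:ℝ) ^ (c - a) * (n:ℝ) ^ (c - b) := by
      rw [← Real.rpow_add hn0, ← Real.rpow_add hn0]
      congr 1; ring
    have hPsplit : P (n + 1) =
        (∏ j ∈ range (n + 1), (c - a + (j:ℝ))) * (∏ j ∈ range (n + 1), (c - b + (j:ℝ))) /
          ((∏ j ∈ range (n + 1), (c + (j:ℝ))) * (∏ j ∈ range (n + 1), (c - a - b + (j:ℝ)))) := by
      rw [hP]
      rw [← Finset.prod_mul_distrib, ← Finset.prod_mul_distrib, ← Finset.prod_div_distrib]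
      refine Finset.prod_congr rfl fun j _ => ?_
      ring_nf
    rw [hPsplit, Real.GammaSeq, Real.GammaSeq, Real.GammaSeq, Real.GammaSeq]
    field_simp
    linear_combination (-1 : ℝ) * hpow
  -- limit of the GammaSeq quotient
  have hQ : Tendsto (fun n : ℕ => Real.GammaSeq c n * Real.GammaSeq (c - a - b) n /
      (Real.GammaSeq (c - a) n * Real.GammaSeq (c - b) n)) atTop
      (𝓝 (Real.Gamma c * Real.Gamma (c - a - b) / (Real.Gamma (c - a) * Real.Gamma (c - b)))) :=
    Tendsto.div ((Real.GammaSeq_tendsto_Gamma c).mul (Real.GammaSeq_tendsto_Gamma (c - a - b)))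
      ((Real.GammaSeq_tendsto_Gamma (c - a)).mul (Real.GammaSeq_tendsto_Gamma (c - b)))
      (mul_ne_zero hza hzb)
  have hP1 : Tendsto (fun n : ℕ => P (n + 1)) atTop (𝓝 S) :=
    hPS.comp (tendsto_add_atTop_nat 1)
  have hP2 : Tendsto (fun n : ℕ => P (n + 1)) atTop
      (𝓝 (Real.Gamma c * Real.Gamma (c - a - b) / (Real.Gamma (c - a) * Real.Gamma (c - b)))) := by
    refine hQ.congr' ?_
    filter_upwards [eventually_ge_atTop 1] with n hn
    exact (key n hn).symm
  exact tendsto_nhds_unique hP1 hP2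

end GaussAux

open GaussAux in
theorem stmt_1 (a b c : ℝ) (hc : ∀ n : ℕ, c ≠ -(n : ℝ)) (h : 0 < c - a - b) :
    Filter.Tendsto (fun x => gaussHF a b c x) (nhdsWithin 1 (Set.Iio 1))
      (nhds (Real.Gamma c * Real.Gamma (c - a - b) /
        (Real.Gamma (c - a) * Real.Gamma (c - b)))) := by
  have hc' : ∀ k : ℕ, c + (k:ℝ) ≠ 0 := by
    intro k hk
    exact hc k (by linarith)
  have hs := GaussAux.summable_t a b c hc' h
  have habel := Real.tendsto_tsum_powerSeries_nhdsWithin_lt hs.hasSum.tendsto_sum_nat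
  rw [GaussAux.gauss_value a b c hc' h] at habel
  exact habel
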